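/- Let F be a field of characteristic zero and G a locally finite group. If all additive commutators of a twisted group algebra F^τ G are central, then F^τ G is commutative. -/

import Mathlib

/-- The additive subgroup generated by all additive commutators of a ring. -/
def commutatorAddSubgroup (R : Type*) [Ring R] : AddSubgroup R :=
  AddSubgroup.closure {x | ∃ a b : R, x = a * b - b * a}

/-- A twisted group algebra `F^τ G`: an `F`-algebra with a basis indexed by `G`
such that the product of two basis elements is a nonzero scalar multiple of the
basis element of the product. -/
theorem stmt_9 (F : Type*) [Field F] [CharZero F] (G : Type*) [Group G]
    (hG : ∀ S : Finset G, Set.Finite ((Subgroup.closure (S : Set G) : Subgroup G) : Set G))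
    (A : Type*) [Ring A] [Algebra F A]
    (b : Module.Basis G F A) (τ : G → G → F) (hτ : ∀ x y, τ x y ≠ 0)
    (hmul : ∀ x y : G, b x * b y = τ x y • b (x * y))
    (hcomm : ∀ x y : A, x * y - y * x ∈ Set.center A) :
    ∀ x y : A, x * y = y * x := by
  have hb0 : ∀ g : G, (b g : A) ≠ 0 := fun g => b.ne_zero g
  have hsc : ∀ (α β : F) (g : G), α • b g = β • b g → α = β := by
    intro α β g h
    have h2 : (α - β) • b g = 0 := by rw [sub_smul, h, sub_self]
    rcases smul_eq_zero.mp h2 with h | h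
    · exact sub_eq_zero.mp h
    · exact absurd h (hb0 g)
  -- τ 1 g = τ 1 1 and τ g 1 = τ 1 1
  have h1g : ∀ g : G, τ 1 g = τ 1 1 := by
    intro g
    have h := mul_assoc (b 1) (b 1) (b g)
    simp only [hmul, one_mul, smul_mul_assoc, mul_smul_comm, smul_smul] at h
    have h2 := hsc _ _ _ h
    field_simp at h2
    exact mul_right_cancel₀ (hτ 1 g) (by linear_combination -h2)
  have hg1 : ∀ g : G, τ g 1 = τ 1 1 := by
    intro g
    have h := mul_assoc (b g) (b 1) (b 1)
    simp only [hmul, one_mul, mul_one, smul_mul_assoc, mul_smul_comm, smul_smul] at h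
    have h2 := hsc _ _ _ h
    field_simp at h2
    exact mul_left_cancel₀ (hτ g 1) (by linear_combination h2)
  -- b 1 = τ 1 1 • 1
  have hone : (b 1 : A) = τ 1 1 • 1 := by
    have he : ∀ a : A, ((τ 1 1)⁻¹ • b 1) * a = a := by
      intro a
      have hmem : a ∈ Submodule.span F (Set.range b) := b.mem_span a
      induction hmem using Submodule.span_induction with
      | mem x hx =>
        obtain ⟨g, rfl⟩ := hx
        rw [smul_mul_assoc, hmul 1 g, one_mul, smul_smul, h1g g,
          inv_mul_cancel₀ (hτ 1 1), one_smul]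
      | zero => rw [mul_zero]
      | add x y hx hy ihx ihy => rw [mul_add, ihx, ihy]
      | smul c x hx ih => rw [mul_smul_comm, ih]
    have h1 : ((τ 1 1)⁻¹ • b 1 : A) = 1 := by
      have := he 1; rwa [mul_one] at this
    calc (b 1 : A) = τ 1 1 • ((τ 1 1)⁻¹ • b 1) := by
          rw [smul_smul, mul_inv_cancel₀ (hτ 1 1), one_smul]
      _ = τ 1 1 • 1 := by rw [h1]
  -- every b g is a unit
  have hunit : ∀ g : G, IsUnit (b g : A) := by
    intro g
    have hr : (b g : A) * ((τ g g⁻¹ * τ 1 1)⁻¹ • b g⁻¹) = 1 := by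
      rw [mul_smul_comm, hmul g g⁻¹, mul_inv_cancel, hone, smul_smul, smul_smul,
        mul_assoc, inv_mul_cancel₀ (mul_ne_zero (hτ g g⁻¹) (hτ 1 1)), one_smul]
    have hl : ((τ g⁻¹ g * τ 1 1)⁻¹ • b g⁻¹) * (b g : A) = 1 := by
      rw [smul_mul_assoc, hmul g⁻¹ g, inv_mul_cancel, hone, smul_smul, smul_smul,
        mul_assoc, inv_mul_cancel₀ (mul_ne_zero (hτ g⁻¹ g) (hτ 1 1)), one_smul]
    have heq : ((τ g⁻¹ g * τ 1 1)⁻¹ • b g⁻¹ : A) = (τ g g⁻¹ * τ 1 1)⁻¹ • b g⁻¹ := by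
      calc ((τ g⁻¹ g * τ 1 1)⁻¹ • b g⁻¹ : A)
          = ((τ g⁻¹ g * τ 1 1)⁻¹ • b g⁻¹) * ((b g) * ((τ g g⁻¹ * τ 1 1)⁻¹ • b g⁻¹)) := by
            rw [hr, mul_one]
        _ = (((τ g⁻¹ g * τ 1 1)⁻¹ • b g⁻¹) * (b g)) * ((τ g g⁻¹ * τ 1 1)⁻¹ • b g⁻¹) := by
            rw [mul_assoc]
        _ = (τ g g⁻¹ * τ 1 1)⁻¹ • b g⁻¹ := by rw [hl, one_mul]
    refine ⟨⟨b g, (τ g g⁻¹ * τ 1 1)⁻¹ • b g⁻¹, hr, ?_⟩, rfl⟩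
    rw [← heq]; exact hl
  -- powers of b g are scalar multiples of b (g^k)
  have hpow : ∀ (g : G) (k : ℕ), ∃ lam : F, lam ≠ 0 ∧ (b g : A) ^ k = lam • b (g ^ k) := by
    intro g k
    induction k with
    | zero =>
      refine ⟨(τ 1 1)⁻¹, inv_ne_zero (hτ 1 1), ?_⟩
      rw [pow_zero, pow_zero, hone, smul_smul, inv_mul_cancel₀ (hτ 1 1), one_smul]
    | succ k ih =>
      obtain ⟨lam, hlam, hk⟩ := ih
      refine ⟨lam * τ (g ^ k) g, mul_ne_zero hlam (hτ _ _), ?_⟩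
      rw [pow_succ, hk, smul_mul_assoc, hmul, smul_smul, pow_succ]
  -- every g has finite order
  have hford : ∀ g : G, ∃ n : ℕ, 0 < n ∧ g ^ n = 1 := by
    intro g
    have hfin : Set.Finite ((Subgroup.closure ({g} : Set G) : Subgroup G) : Set G) := by
      have := hG {g}
      simpa using this
    haveI : Finite (Subgroup.closure ({g} : Set G)) := hfin.to_subtype
    set x : Subgroup.closure ({g} : Set G) :=
      ⟨g, Subgroup.subset_closure (Set.mem_singleton g)⟩ with hx
    refine ⟨orderOf x, orderOf_pos x, ?_⟩
    have hxn : x ^ orderOf x = 1 := pow_orderOf_eq_one x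
    have := congrArg (Subtype.val) hxn
    rw [SubmonoidClass.coe_pow] at this; exact this
  -- key: b g is central
  have hcentral : ∀ (g : G) (v : A), b g * v = v * b g := by
    intro g v
    set u : A := b g with hu
    set C : A := u * v - v * u with hC
    have hCc : ∀ a : A, a * C = C * a := fun a => ((hcomm u v).comm a).symm
    have h2 : u * v = v * u + C := by rw [hC]; abel
    have hkey : ∀ k : ℕ, u ^ (k + 1) * v = v * u ^ (k + 1) + ((k + 1 : ℕ) : F) • (u ^ k * C) := by
      intro k
      induction k with
      | zero => simp [h2]
      | succ k ih =>
        have hx : (u ^ (k+1) * C : A) + ((k+1 : ℕ) : F) • (u ^ (k+1) * C)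
            = ((k+1+1 : ℕ) : F) • (u ^ (k+1) * C) := by
          rw [show ((k+1+1 : ℕ) : F) = ((k+1 : ℕ) : F) + 1 by push_cast; ring,
            add_smul, one_smul, add_comm]
        calc u ^ (k + 1 + 1) * v
            = u * (u ^ (k + 1) * v) := by rw [← mul_assoc, ← pow_succ']
          _ = u * (v * u ^ (k+1) + ((k+1 : ℕ) : F) • (u ^ k * C)) := by rw [ih]
          _ = (u * v) * u ^ (k+1) + ((k+1 : ℕ) : F) • (u ^ (k+1) * C) := by
              rw [mul_add, mul_smul_comm, ← mul_assoc, ← mul_assoc, ← pow_succ']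
          _ = (v * u + C) * u ^ (k+1) + ((k+1 : ℕ) : F) • (u ^ (k+1) * C) := by rw [← h2]
          _ = v * u ^ (k+1+1) + (C * u ^ (k+1) + ((k+1 : ℕ) : F) • (u ^ (k+1) * C)) := by
              rw [add_mul, mul_assoc, ← pow_succ', add_assoc]
          _ = v * u ^ (k+1+1) + ((k+1+1 : ℕ) : F) • (u ^ (k+1) * C) := by
              rw [← hCc, hx]
    obtain ⟨n, hn, hgn⟩ := hford g
    obtain ⟨m, rfl⟩ : ∃ m, n = m + 1 := ⟨n - 1, (Nat.succ_pred_eq_of_pos hn).symm⟩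
    obtain ⟨lam, hlam, hpw⟩ := hpow g (m + 1)
    have hsc1 : u ^ (m + 1) = (lam * τ 1 1) • (1 : A) := by
      rw [hu, hpw, hgn, hone, smul_smul]
    have h4 : u ^ (m + 1) * v = v * u ^ (m + 1) := by
      rw [hsc1, smul_mul_assoc, one_mul, mul_smul_comm, mul_one]
    have h5 := hkey m
    rw [h4] at h5
    have h6 : ((m + 1 : ℕ) : F) • (u ^ m * C) = 0 := (left_eq_add.mp h5)
    have h7 : u ^ m * C = 0 := by
      rcases smul_eq_zero.mp h6 with h | h
      · exact absurd h (by exact_mod_cast Nat.succ_ne_zero m)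
      · exact h
    have h8 : C = 0 := by
      have hum : IsUnit (u ^ m) := by rw [hu]; exact (hunit g).pow m
      exact hum.mul_right_eq_zero.mp h7
    rw [hC] at h8
    exact sub_eq_zero.mp h8
  -- conclude commutativity
  intro x y
  have hmem : x ∈ Submodule.span F (Set.range b) := b.mem_span x
  induction hmem using Submodule.span_induction with
  | mem z hz =>
    obtain ⟨g, rfl⟩ := hz
    exact hcentral g y
  | zero => rw [zero_mul, mul_zero]
  | add p q hp hq ihp ihq => rw [add_mul, mul_add, ihp, ihq]
  | smul c p hp ih => rw [smul_mul_assoc, mul_smul_comm, ih]
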